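/- For every integer m ≥ 1, the chromatic symmetric function of the tadpole graph T^{3,m} satisfies X_{T^{3,m}} = 2 X_{P_{m+3}} − X_{C_2} · X_{P_{m+1}}, where X_{C_2} = 2 e_2 is the chromatic symmetric function of a single edge K_2. -/

import Mathlib

open scoped BigOperators

/-- The chromatic symmetric function `X_G` of a finite simple graph `G`, as a formal
power series in countably many commuting variables `x_0, x_1, x_2, …` (the colors are
the natural numbers): the coefficient of the monomial `∏ i, x_i ^ (d i)` is the number
of proper colorings `κ : V → ℕ` whose color fibers have the sizes prescribed by `d`. -/
noncomputable def csf {V : Type} [Fintype V] (G : SimpleGraph V) : MvPowerSeries ℕ ℚ :=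
  fun d => (Nat.card {κ : V → ℕ // (∀ a b : V, G.Adj a b → κ a ≠ κ b) ∧
      ∀ i : ℕ, Nat.card {v : V // κ v = i} = d i} : ℚ)

/- The elementary symmetric function `e_k`, as a formal power series:
the sum of all squarefree monomials of total degree `k`. -/
open Classical in
noncomputable def esym (k : ℕ) : MvPowerSeries ℕ ℚ :=
  fun d => if (∀ i, d i ≤ 1) ∧ (d.sum fun _ e => e) = k then 1 else 0

/-- The path `P_n` on the `n` vertices `0, 1, …, n-1`, with edges `{i, i+1}`. -/
def path (n : ℕ) : SimpleGraph (Fin n) :=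
  SimpleGraph.fromRel (fun i j => (i : ℕ) + 1 = (j : ℕ))

/-- The cycle `C_n` on the `n` vertices `0, 1, …, n-1`, with edges `{i, i+1 mod n}`
(for `n = 2` this is the single edge `K_2`). -/
def cycle (n : ℕ) : SimpleGraph (Fin n) :=
  SimpleGraph.fromRel (fun i j => ((i : ℕ) + 1) % n = (j : ℕ))

/-- The tadpole graph `T^{a,b}` on `a + b` vertices: the cycle `C_a` on the vertices
`0, …, a-1` (consecutive vertices adjacent, together with the closing edge `{0, a-1}`)
and the path `P_b` on the vertices `a, …, a+b-1`, joined by the edge `{a-1, a}`.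
Here vertex `i - 1` plays the role of the vertex `v_i` of the paper. -/
def tadpole (a b : ℕ) : SimpleGraph (Fin (a + b)) :=
  SimpleGraph.fromRel (fun i j => (i : ℕ) + 1 = (j : ℕ) ∨ ((i : ℕ) = 0 ∧ (j : ℕ) = a - 1))

def proper {V : Type} (G : SimpleGraph V) (κ : V → ℕ) : Prop :=
  ∀ a b : V, G.Adj a b → κ a ≠ κ b

def fib {V : Type} (κ : V → ℕ) (d : ℕ →₀ ℕ) : Prop :=
  ∀ i : ℕ, Nat.card {v : V // κ v = i} = d i

lemma coeff_csf {V : Type} [Fintype V] (G : SimpleGraph V) (d : ℕ →₀ ℕ) :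
    MvPowerSeries.coeff d (csf G) = (Nat.card {κ : V → ℕ // proper G κ ∧ fib κ d} : ℚ) := rfl

lemma fib_comp {V W : Type} (e : V ≃ W) (κ : W → ℕ) (d : ℕ →₀ ℕ) :
    fib (κ ∘ e) d ↔ fib κ d := by
  have h : ∀ i, Nat.card {v : V // κ (e v) = i} = Nat.card {w : W // κ w = i} := fun i =>
    Nat.card_congr (e.subtypeEquiv (fun a => Iff.rfl))
  constructor <;> intro hf i
  · rw [← h i]; exact hf i
  · show Nat.card {v : V // κ (e v) = i} = d i
    rw [h i]; exact hf i

lemma color_mem_support {V : Type} [Fintype V] {κ : V → ℕ} {d : ℕ →₀ ℕ} (hf : fib κ d)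
    (v : V) : κ v ∈ d.support := by
  rw [Finsupp.mem_support_iff, ← hf (κ v)]
  have : Nonempty {w : V // κ w = κ v} := ⟨⟨v, rfl⟩⟩
  have : 0 < Nat.card {w : V // κ w = κ v} := Nat.card_pos
  omega

lemma finite_colorings {V : Type} [Fintype V] (P : (V → ℕ) → Prop) (d : ℕ →₀ ℕ) :
    Finite {κ : V → ℕ // P κ ∧ fib κ d} := by
  classical
  apply Finite.of_injective (fun κp => (fun v => (⟨κp.1 v, color_mem_support κp.2.2 v⟩ :
    {i // i ∈ d.support})) : {κ : V → ℕ // P κ ∧ fib κ d} → (V → {i // i ∈ d.support}))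
  intro a b hab
  apply Subtype.ext; funext v
  have := congrFun hab v
  simpa [Subtype.ext_iff] using this

def sumG {V W : Type} (G : SimpleGraph V) (H : SimpleGraph W) : SimpleGraph (V ⊕ W) where
  Adj x y := match x, y with
    | .inl a, .inl b => G.Adj a b
    | .inr a, .inr b => H.Adj a b
    | _, _ => False
  symm := ⟨by rintro (a|a) (b|b) h <;> simp_all [SimpleGraph.adj_comm]⟩
  loopless := ⟨by rintro (a|a) h <;> simp_all⟩

def subSum {V W : Type} (p : V ⊕ W → Prop) :
    {x : V ⊕ W // p x} ≃ {v : V // p (.inl v)} ⊕ {w : W // p (.inr w)} where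
  toFun x := match x with
    | ⟨.inl v, h⟩ => .inl ⟨v, h⟩
    | ⟨.inr w, h⟩ => .inr ⟨w, h⟩
  invFun x := match x with
    | .inl ⟨v, h⟩ => ⟨.inl v, h⟩
    | .inr ⟨w, h⟩ => ⟨.inr w, h⟩
  left_inv := by rintro ⟨(v|w), h⟩ <;> rfl
  right_inv := by rintro (⟨v,h⟩|⟨w,h⟩) <;> rfl

lemma card_fiber_sum {V W : Type} [Fintype V] [Fintype W] (κ : V ⊕ W → ℕ) (i : ℕ) :
    Nat.card {x : V ⊕ W // κ x = i} =
      Nat.card {v : V // κ (.inl v) = i} + Nat.card {w : W // κ (.inr w) = i} := by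
  rw [Nat.card_congr (subSum (fun x => κ x = i)), Nat.card_sum]

lemma proper_sumG_iff {V W : Type} (G : SimpleGraph V) (H : SimpleGraph W) (κ : V ⊕ W → ℕ) :
    proper (sumG G H) κ ↔ proper G (fun v => κ (.inl v)) ∧ proper H (fun w => κ (.inr w)) := by
  constructor
  · intro h; exact ⟨fun a b hab => h _ _ hab, fun a b hab => h _ _ hab⟩
  · rintro ⟨h1, h2⟩ (a|a) (b|b) hab
    · exact h1 a b hab
    · exact absurd hab (by simp [sumG])
    · exact absurd hab (by simp [sumG])
    · exact h2 a b hab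

lemma nat_card_sigma {ι : Type} [Fintype ι] (f : ι → Type) [∀ i, Finite (f i)] :
    Nat.card (Σ i, f i) = ∑ i, Nat.card (f i) := by
  classical
  letI := fun i => Fintype.ofFinite (f i)
  simp [Nat.card_eq_fintype_card, Fintype.card_sigma]

lemma csf_mul {V W : Type} [Fintype V] [Fintype W] (G : SimpleGraph V) (H : SimpleGraph W) :
    csf G * csf H = csf (sumG G H) := by
  classical
  apply MvPowerSeries.ext
  intro d
  rw [MvPowerSeries.coeff_mul, coeff_csf]
  set A := {κ : V ⊕ W → ℕ // proper (sumG G H) κ ∧ fib κ d} with hA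
  set B1 : (ℕ →₀ ℕ) → Type := fun d1 => {κ1 : V → ℕ // proper G κ1 ∧ fib κ1 d1} with hB1
  set B2 : (ℕ →₀ ℕ) → Type := fun d2 => {κ2 : W → ℕ // proper H κ2 ∧ fib κ2 d2} with hB2
  have hsum : ∀ (κ : A) (i : ℕ),
      Nat.card {v : V // κ.1 (.inl v) = i} + Nat.card {w : W // κ.1 (.inr w) = i} = d i := by
    intro κ i
    rw [← card_fiber_sum]; exact κ.2.2 i
  -- the two marginal degree functions
  have hd1def : ∀ (κ : A), ∀ i : ℕ,
      (Nat.card {v : V // κ.1 (.inl v) = i} ≠ 0) → i ∈ d.support := by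
    intro κ i h
    rw [Finsupp.mem_support_iff]
    have := hsum κ i; omega
  have hd2def : ∀ (κ : A), ∀ i : ℕ,
      (Nat.card {w : W // κ.1 (.inr w) = i} ≠ 0) → i ∈ d.support := by
    intro κ i h
    rw [Finsupp.mem_support_iff]
    have := hsum κ i; omega
  set F : A → (Finset.HasAntidiagonal.antidiagonal d : Finset ((ℕ →₀ ℕ) × (ℕ →₀ ℕ))) := fun κ =>
    ⟨(Finsupp.onFinset d.support (fun i => Nat.card {v : V // κ.1 (.inl v) = i}) (hd1def κ),
      Finsupp.onFinset d.support (fun i => Nat.card {w : W // κ.1 (.inr w) = i}) (hd2def κ)),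
      by
        rw [Finset.HasAntidiagonal.mem_antidiagonal]
        ext i
        simp only [Finsupp.add_apply, Finsupp.onFinset_apply]
        exact hsum κ i⟩ with hF
  haveI : Finite A := finite_colorings _ _
  haveI : ∀ p : (Finset.HasAntidiagonal.antidiagonal d : Finset _), Finite {κ : A // F κ = p} :=
    fun p => Subtype.finite
  have e1 : Nat.card A = ∑ p : (Finset.HasAntidiagonal.antidiagonal d : Finset _), Nat.card {κ : A // F κ = p} := by
    rw [Nat.card_congr (Equiv.sigmaFiberEquiv F).symm, nat_card_sigma]
  have e2 : ∀ p : (Finset.HasAntidiagonal.antidiagonal d : Finset _),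
      Nat.card {κ : A // F κ = p} = Nat.card (B1 p.1.1) * Nat.card (B2 p.1.2) := by
    intro p
    rw [← Nat.card_prod]
    apply Nat.card_congr
    refine ⟨fun x => (⟨fun v => x.1.1 (.inl v), ?_, ?_⟩, ⟨fun w => x.1.1 (.inr w), ?_, ?_⟩),
            fun y => ⟨⟨Sum.elim y.1.1 y.2.1, ?_, ?_⟩, ?_⟩, fun x => ?_, fun y => ?_⟩
    · exact (proper_sumG_iff G H x.1.1 |>.mp x.1.2.1).1
    · intro i
      have h1 : (F x.1).1.1 = p.1.1 := by rw [x.2]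
      have := congrFun (congrArg (fun q : ℕ →₀ ℕ => (q : ℕ → ℕ)) h1) i
      simpa [F, Finsupp.onFinset_apply] using this
    · exact (proper_sumG_iff G H x.1.1 |>.mp x.1.2.1).2
    · intro i
      have h2 : (F x.1).1.2 = p.1.2 := by rw [x.2]
      have := congrFun (congrArg (fun q : ℕ →₀ ℕ => (q : ℕ → ℕ)) h2) i
      simpa [F, Finsupp.onFinset_apply] using this
    · rw [proper_sumG_iff]; exact ⟨y.1.2.1, y.2.2.1⟩
    · intro i
      rw [card_fiber_sum]
      have hadd : p.1.1 + p.1.2 = d := Finset.HasAntidiagonal.mem_antidiagonal.mp p.2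
      have := congrFun (congrArg (fun q : ℕ →₀ ℕ => (q : ℕ → ℕ)) hadd) i
      simp only [Finsupp.coe_add, Pi.add_apply] at this
      rw [← this]
      show Nat.card {v : V // y.1.1 v = i} + Nat.card {w : W // y.2.1 w = i} = _
      rw [y.1.2.2 i, y.2.2.2 i]
    · apply Subtype.ext
      apply Prod.ext <;> (apply Finsupp.ext; intro i) <;> simp only [F, Finsupp.onFinset_apply]
      · show Nat.card {v : V // y.1.1 v = i} = p.1.1 i
        exact y.1.2.2 i
      · show Nat.card {w : W // y.2.1 w = i} = p.1.2 i
        exact y.2.2.2 i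
    · apply Subtype.ext; apply Subtype.ext
      funext z; cases z <;> rfl
    · apply Prod.ext <;> apply Subtype.ext <;> rfl
  rw [e1]
  push_cast
  rw [← Finset.sum_coe_sort]
  apply Finset.sum_congr rfl
  intro p _
  rw [e2 p]
  push_cast
  rfl
lemma proper_path_iff (n : ℕ) (κ : Fin n → ℕ) :
    proper (path n) κ ↔ ∀ k : ℕ, ∀ h : k + 1 < n, κ ⟨k, by omega⟩ ≠ κ ⟨k+1, h⟩ := by
  constructor
  · intro h k hk
    apply h
    rw [path, SimpleGraph.fromRel_adj]
    refine ⟨by simp [Fin.ext_iff], Or.inl rfl⟩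
  · intro h a b hab
    rw [path, SimpleGraph.fromRel_adj] at hab
    obtain ⟨hne, hr | hr⟩ := hab
    · have hlt : (a : ℕ) + 1 < n := by omega
      have := h a hlt
      convert this using 2 <;> simp [Fin.ext_iff] <;> omega
    · have hlt : (b : ℕ) + 1 < n := by omega
      have := (h b hlt).symm
      convert this using 2 <;> simp [Fin.ext_iff] <;> omega

lemma proper_cycle2_iff (κ : Fin 2 → ℕ) :
    proper (cycle 2) κ ↔ κ 0 ≠ κ 1 := by
  constructor
  · intro h
    apply h
    rw [cycle, SimpleGraph.fromRel_adj]
    exact ⟨by decide, Or.inl (by decide)⟩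
  · intro h a b hab
    rw [cycle, SimpleGraph.fromRel_adj] at hab
    fin_cases a <;> fin_cases b <;> simp_all <;> omega

lemma proper_tadpole3_iff (m : ℕ) (κ : Fin (3 + m) → ℕ) :
    proper (tadpole 3 m) κ ↔
      ((∀ k : ℕ, ∀ h : k + 1 < 3 + m, κ ⟨k, by omega⟩ ≠ κ ⟨k+1, h⟩) ∧
        κ ⟨0, by omega⟩ ≠ κ ⟨2, by omega⟩) := by
  constructor
  · intro h
    constructor
    · intro k hk
      apply h
      rw [tadpole, SimpleGraph.fromRel_adj]
      refine ⟨by simp [Fin.ext_iff], Or.inl (Or.inl rfl)⟩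
    · apply h
      rw [tadpole, SimpleGraph.fromRel_adj]
      refine ⟨by simp [Fin.ext_iff], Or.inl (Or.inr (by simp))⟩
  · rintro ⟨h1, h2⟩ a b hab
    rw [tadpole, SimpleGraph.fromRel_adj] at hab
    obtain ⟨hne, (hr | ⟨h0, h3⟩) | (hr | ⟨h0, h3⟩)⟩ := hab
    · have hlt : (a : ℕ) + 1 < 3 + m := by omega
      have := h1 a hlt
      convert this using 2 <;> simp [Fin.ext_iff] <;> omega
    · have := h2
      convert this using 2 <;> simp only [Fin.ext_iff] <;> omega
    · have hlt : (b : ℕ) + 1 < 3 + m := by omega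
      have := (h1 b hlt).symm
      convert this using 2 <;> simp [Fin.ext_iff] <;> omega
    · have := h2.symm
      convert this using 2 <;> simp only [Fin.ext_iff] <;> omega

lemma card_fiber_two (κ : Fin 2 → ℕ) (i : ℕ) :
    Nat.card {v : Fin 2 // κ v = i} =
      (if κ 0 = i then 1 else 0) + (if κ 1 = i then 1 else 0) := by
  classical
  rw [Nat.card_eq_fintype_card, Fintype.card_subtype, Finset.card_filter, Fin.sum_univ_two]

lemma fib_sum {V : Type} [Fintype V] {κ : V → ℕ} {d : ℕ →₀ ℕ} (hf : fib κ d) :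
    (d.sum fun _ e => e) = Fintype.card V := by
  classical
  have e0 : V ≃ Σ i : {i // i ∈ d.support}, {v : V // κ v = i.1} := by
    refine (Equiv.sigmaFiberEquiv
      (fun v => (⟨κ v, color_mem_support hf v⟩ : {i // i ∈ d.support}))).symm.trans ?_
    apply Equiv.sigmaCongrRight
    intro i
    exact Equiv.subtypeEquivRight (fun v => by simp [Subtype.ext_iff])
  have := nat_card_sigma (fun i : {i // i ∈ d.support} => {v : V // κ v = i.1})
  rw [← Nat.card_congr e0] at this
  rw [Nat.card_eq_fintype_card] at this
  rw [this, Finsupp.sum, ← Finset.sum_coe_sort]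
  exact Finset.sum_congr rfl (fun i _ => (hf i.1).symm)

def eVW (m : ℕ) : Fin (m+3) ≃ Fin 2 ⊕ Fin (m+1) where
  toFun v := if h : (v : ℕ) < 2 then .inl ⟨(v : ℕ), h⟩ else .inr ⟨(v : ℕ) - 2, by omega⟩
  invFun x := match x with
    | .inl i => ⟨(i : ℕ), by omega⟩
    | .inr j => ⟨(j : ℕ) + 2, by omega⟩
  left_inv v := by
    dsimp only
    by_cases h : (v : ℕ) < 2
    · rw [dif_pos h]
    · rw [dif_neg h]
      apply Fin.ext
      show (v : ℕ) - 2 + 2 = v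
      omega
  right_inv x := by
    rcases x with i | j <;> dsimp only
    · show (if h : (i : ℕ) < 2 then _ else _) = Sum.inl i
      rw [dif_pos i.isLt]
    · show (if h : (j : ℕ) + 2 < 2 then _ else _) = Sum.inr j
      rw [dif_neg (by omega)]
      exact congrArg Sum.inr (Fin.ext (by simp))

lemma eVW_0 (m : ℕ) (h : 0 < m + 3) : eVW m ⟨0, h⟩ = .inl 0 := rfl
lemma eVW_1 (m : ℕ) (h : 1 < m + 3) : eVW m ⟨1, h⟩ = .inl 1 := rfl
lemma eVW_ge (m k : ℕ) (h : k < m + 3) (h2 : 2 ≤ k) :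
    eVW m ⟨k, h⟩ = .inr ⟨k - 2, by omega⟩ := by
  show (if h' : k < 2 then _ else _) = _
  rw [dif_neg (by omega)]
lemma eVW_symm_inl (m : ℕ) (i : Fin 2) :
    (eVW m).symm (.inl i) = ⟨(i : ℕ), by omega⟩ := rfl
lemma eVW_symm_inr (m : ℕ) (j : Fin (m+1)) :
    (eVW m).symm (.inr j) = ⟨(j : ℕ) + 2, by omega⟩ := rfl

open Classical in
noncomputable def equivBAC (m : ℕ) (d : ℕ →₀ ℕ) :
    {κ : Fin (m+3) → ℕ // proper (path (m+3)) κ ∧ fib κ d} ≃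
      {κ : Fin (3+m) → ℕ // proper (tadpole 3 m) κ ∧ fib κ d} ⊕
      {κ : Fin (m+3) → ℕ //
        (proper (path (m+3)) κ ∧ κ ⟨0, by omega⟩ = κ ⟨2, by omega⟩) ∧ fib κ d} where
  toFun κ := if h : κ.1 ⟨0, by omega⟩ = κ.1 ⟨2, by omega⟩
    then .inr ⟨κ.1, ⟨κ.2.1, h⟩, κ.2.2⟩
    else .inl ⟨κ.1 ∘ (finCongr (by omega : 3 + m = m + 3)), by
      rw [proper_tadpole3_iff]
      constructor
      · intro k hk
        exact (proper_path_iff (m+3) κ.1).mp κ.2.1 k (by omega)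
      · exact h, (fib_comp (finCongr (by omega : 3 + m = m + 3)) κ.1 d).mpr κ.2.2⟩
  invFun x := match x with
    | .inl a => ⟨a.1 ∘ (finCongr (by omega : m + 3 = 3 + m)), by
        rw [proper_path_iff]
        intro k hk
        exact ((proper_tadpole3_iff m a.1).mp a.2.1).1 k (by omega),
        (fib_comp (finCongr (by omega : m + 3 = 3 + m)) a.1 d).mpr a.2.2⟩
    | .inr c => ⟨c.1, c.2.1.1, c.2.2⟩
  left_inv κ := by
    dsimp only
    by_cases h : κ.1 ⟨0, by omega⟩ = κ.1 ⟨2, by omega⟩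
    · rw [dif_pos h]
    · rw [dif_neg h]
      exact Subtype.ext rfl
  right_inv x := by
    rcases x with a | c <;> dsimp only
    · split
      · next h => exact absurd h ((proper_tadpole3_iff m a.1).mp a.2.1).2
      · next h => exact congrArg Sum.inl (Subtype.ext rfl)
    · split
      · next h => exact congrArg Sum.inr (Subtype.ext rfl)
      · next h => exact absurd c.2.1.2 h

def E2 (m : ℕ) : Fin (m+3) ≃ Fin 2 ⊕ Fin (m+1) :=
  (eVW m).trans (Equiv.sumCongr (Equiv.swap 0 1) (Equiv.refl (Fin (m+1))))

lemma E2_0 (m : ℕ) (h : 0 < m + 3) : E2 m ⟨0, h⟩ = .inl 1 := by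
  show (Equiv.sumCongr (Equiv.swap 0 1) (Equiv.refl (Fin (m+1)))) (eVW m ⟨0, h⟩) = .inl 1
  rw [eVW_0]; simp

lemma E2_1 (m : ℕ) (h : 1 < m + 3) : E2 m ⟨1, h⟩ = .inl 0 := by
  show (Equiv.sumCongr (Equiv.swap 0 1) (Equiv.refl (Fin (m+1)))) (eVW m ⟨1, h⟩) = .inl 0
  rw [eVW_1]; simp

lemma E2_ge (m k : ℕ) (h : k < m + 3) (h2 : 2 ≤ k) :
    E2 m ⟨k, h⟩ = .inr ⟨k - 2, by omega⟩ := by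
  show (Equiv.sumCongr (Equiv.swap 0 1) (Equiv.refl (Fin (m+1)))) (eVW m ⟨k, h⟩) = _
  rw [eVW_ge m k h h2]; simp
  rw [Equiv.swap_apply_of_ne_of_ne (by simp) (by simp)]

lemma E2_symm_inl0 (m : ℕ) : (E2 m).symm (.inl 0) = ⟨1, by omega⟩ := by
  show (eVW m).symm ((Equiv.sumCongr (Equiv.swap 0 1) (Equiv.refl (Fin (m+1)))).symm (.inl 0)) = _
  simp [eVW_symm_inl]

lemma E2_symm_inl1 (m : ℕ) : (E2 m).symm (.inl 1) = ⟨0, by omega⟩ := by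
  show (eVW m).symm ((Equiv.sumCongr (Equiv.swap 0 1) (Equiv.refl (Fin (m+1)))).symm (.inl 1)) = _
  simp [eVW_symm_inl]

lemma E2_symm_inr (m : ℕ) (j : Fin (m+1)) :
    (E2 m).symm (.inr j) = ⟨(j : ℕ) + 2, by omega⟩ := by
  show (eVW m).symm ((Equiv.sumCongr (Equiv.swap 0 1) (Equiv.refl (Fin (m+1)))).symm (.inr j)) = _
  simp
  rw [Equiv.swap_apply_of_ne_of_ne (by simp) (by simp), eVW_symm_inr]

set_option maxHeartbeats 2000000 in
open Classical in
noncomputable def equivDBC (m : ℕ) (d : ℕ →₀ ℕ) :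
    {κ : Fin 2 ⊕ Fin (m+1) → ℕ // proper (sumG (cycle 2) (path (m+1))) κ ∧ fib κ d} ≃
      {κ : Fin (m+3) → ℕ // proper (path (m+3)) κ ∧ fib κ d} ⊕
      {κ : Fin (m+3) → ℕ //
        (proper (path (m+3)) κ ∧ κ ⟨0, by omega⟩ = κ ⟨2, by omega⟩) ∧ fib κ d} where
  toFun κ :=
    have hcyc : κ.1 (.inl 0) ≠ κ.1 (.inl 1) :=
      (proper_cycle2_iff _).mp ((proper_sumG_iff _ _ κ.1).mp κ.2.1).1
    have hpat : ∀ k : ℕ, ∀ h : k + 1 < m + 1,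
        κ.1 (.inr ⟨k, by omega⟩) ≠ κ.1 (.inr ⟨k+1, h⟩) :=
      (proper_path_iff _ _).mp ((proper_sumG_iff _ _ κ.1).mp κ.2.1).2
    if h : κ.1 (.inl 1) = κ.1 (.inr ⟨0, by omega⟩)
    then .inr ⟨κ.1 ∘ (E2 m), ⟨by
        rw [proper_path_iff]
        intro k hk
        show κ.1 (E2 m ⟨k, by omega⟩) ≠ κ.1 (E2 m ⟨k+1, hk⟩)
        rcases k with _ | _ | k
        · rw [E2_0 m (by omega), E2_1 m hk]
          exact hcyc.symm
        · rw [E2_1 m (by omega), E2_ge m (1+1) hk (by omega)]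
          exact fun heq => hcyc (heq.trans h.symm)
        · rw [E2_ge m (k+2) (by omega) (by omega), E2_ge m (k+2+1) hk (by omega)]
          exact hpat k (by omega), by
        show κ.1 (E2 m ⟨0, by omega⟩) = κ.1 (E2 m ⟨2, by omega⟩)
        rw [E2_0 m (by omega), E2_ge m 2 (by omega) (by omega)]
        exact h⟩,
      (fib_comp (E2 m) κ.1 d).mpr κ.2.2⟩
    else .inl ⟨κ.1 ∘ (eVW m), by
        rw [proper_path_iff]
        intro k hk
        show κ.1 (eVW m ⟨k, by omega⟩) ≠ κ.1 (eVW m ⟨k+1, hk⟩)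
        rcases k with _ | _ | k
        · rw [eVW_0 m (by omega), eVW_1 m hk]
          exact hcyc
        · rw [eVW_1 m (by omega), eVW_ge m (1+1) hk (by omega)]
          exact h
        · rw [eVW_ge m (k+2) (by omega) (by omega), eVW_ge m (k+2+1) hk (by omega)]
          exact hpat k (by omega),
      (fib_comp (eVW m) κ.1 d).mpr κ.2.2⟩
  invFun x := match x with
    | .inl b => ⟨b.1 ∘ (eVW m).symm, by
        have hb := (proper_path_iff _ b.1).mp b.2.1
        rw [proper_sumG_iff]
        constructor
        · rw [proper_cycle2_iff]
          show b.1 ((eVW m).symm (.inl 0)) ≠ b.1 ((eVW m).symm (.inl 1))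
          rw [eVW_symm_inl, eVW_symm_inl]
          exact hb 0 (by omega)
        · rw [proper_path_iff]
          intro k hk
          show b.1 ((eVW m).symm (.inr ⟨k, by omega⟩)) ≠ b.1 ((eVW m).symm (.inr ⟨k+1, hk⟩))
          rw [eVW_symm_inr, eVW_symm_inr]
          exact hb (k+2) (by omega),
      (fib_comp (eVW m).symm b.1 d).mpr b.2.2⟩
    | .inr c => ⟨c.1 ∘ (E2 m).symm, by
        have hc := (proper_path_iff _ c.1).mp c.2.1.1
        rw [proper_sumG_iff]
        constructor
        · rw [proper_cycle2_iff]
          show c.1 ((E2 m).symm (.inl 0)) ≠ c.1 ((E2 m).symm (.inl 1))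
          rw [E2_symm_inl0, E2_symm_inl1]
          exact (hc 0 (by omega)).symm
        · rw [proper_path_iff]
          intro k hk
          show c.1 ((E2 m).symm (.inr ⟨k, by omega⟩)) ≠ c.1 ((E2 m).symm (.inr ⟨k+1, hk⟩))
          rw [E2_symm_inr, E2_symm_inr]
          exact hc (k+2) (by omega),
      (fib_comp (E2 m).symm c.1 d).mpr c.2.2⟩
  left_inv κ := by
    dsimp only
    by_cases h : κ.1 (.inl 1) = κ.1 (.inr ⟨0, by omega⟩)
    · rw [dif_pos h]
      exact Subtype.ext (funext fun x => congrArg κ.1 ((E2 m).apply_symm_apply x))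
    · rw [dif_neg h]
      exact Subtype.ext (funext fun x => congrArg κ.1 ((eVW m).apply_symm_apply x))
  right_inv x := by
    rcases x with b | c <;> dsimp only
    · split
      · next h' =>
          have hb := (proper_path_iff _ b.1).mp b.2.1
          refine absurd ?_ (hb 1 (by omega))
          have h2 : b.1 ((eVW m).symm (.inl 1)) = b.1 ((eVW m).symm (.inr ⟨0, by omega⟩)) := h'
          rw [eVW_symm_inl, eVW_symm_inr] at h2
          exact h2
      · next h' =>
          exact congrArg Sum.inl (Subtype.ext (funext fun v =>
            congrArg b.1 ((eVW m).symm_apply_apply v)))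
    · split
      · next h' =>
          exact congrArg Sum.inr (Subtype.ext (funext fun v =>
            congrArg c.1 ((E2 m).symm_apply_apply v)))
      · next h' =>
          refine absurd ?_ h'
          show c.1 ((E2 m).symm (.inl 1)) = c.1 ((E2 m).symm (.inr ⟨0, by omega⟩))
          rw [E2_symm_inl1, E2_symm_inr]
          exact c.2.1.2

lemma card_identity (m : ℕ) (d : ℕ →₀ ℕ) :
    Nat.card {κ : Fin (3+m) → ℕ // proper (tadpole 3 m) κ ∧ fib κ d} +
      Nat.card {κ : Fin 2 ⊕ Fin (m+1) → ℕ //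
        proper (sumG (cycle 2) (path (m+1))) κ ∧ fib κ d} =
    2 * Nat.card {κ : Fin (m+3) → ℕ // proper (path (m+3)) κ ∧ fib κ d} := by
  haveI := finite_colorings (V := Fin (3+m)) (proper (tadpole 3 m)) d
  haveI := finite_colorings (V := Fin (m+3)) (proper (path (m+3))) d
  haveI := finite_colorings (V := Fin (m+3))
    (fun κ => proper (path (m+3)) κ ∧ κ ⟨0, by omega⟩ = κ ⟨2, by omega⟩) d
  haveI := finite_colorings (V := Fin 2 ⊕ Fin (m+1)) (proper (sumG (cycle 2) (path (m+1)))) d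
  have h1 := Nat.card_congr (equivBAC m d)
  rw [Nat.card_sum] at h1
  have h2 := Nat.card_congr (equivDBC m d)
  rw [Nat.card_sum] at h2
  rw [h2, h1]
  ring

lemma csf_cycle2 : csf (cycle 2) = 2 * esym 2 := by
  classical
  apply MvPowerSeries.ext; intro d
  rw [coeff_csf, two_mul, map_add, MvPowerSeries.coeff_apply]
  simp only [esym]
  by_cases hd : (∀ i, d i ≤ 1) ∧ (d.sum fun _ e => e) = 2
  · rw [if_pos hd]
    obtain ⟨hle, hsum⟩ := hd
    have hone : ∀ i ∈ d.support, d i = 1 := fun i hi =>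
      le_antisymm (hle i) (Nat.one_le_iff_ne_zero.mpr (Finsupp.mem_support_iff.mp hi))
    have hcard : d.support.card = 2 := by
      have h2 : (d.sum fun _ e => e) = ∑ i ∈ d.support, d i := rfl
      rw [h2, Finset.sum_congr rfl hone] at hsum
      simpa using hsum
    obtain ⟨i, j, hij, hsuppeq⟩ := Finset.card_eq_two.mp hcard
    have di : d i = 1 := hone i (by rw [hsuppeq]; simp)
    have dj : d j = 1 := hone j (by rw [hsuppeq]; simp)
    have dother : ∀ c, c ≠ i → c ≠ j → d c = 0 := fun c h1 h2 =>
      Finsupp.notMem_support_iff.mp (by rw [hsuppeq]; simp [h1, h2])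
    set κa : Fin 2 → ℕ := fun v => if v = 0 then i else j with hκa
    set κb : Fin 2 → ℕ := fun v => if v = 0 then j else i with hκb
    have ha0 : κa 0 = i := by simp [hκa]
    have ha1 : κa 1 = j := by simp [hκa]
    have hb0 : κb 0 = j := by simp [hκb]
    have hb1 : κb 1 = i := by simp [hκb]
    have hfib : ∀ (κ : Fin 2 → ℕ), κ 0 = i → κ 1 = j → fib κ d := by
      intro κ h0 h1 c
      rw [card_fiber_two, h0, h1]
      by_cases hci : c = i
      · subst hci; rw [if_pos rfl, if_neg (fun h => hij h.symm), di]
      · by_cases hcj : c = j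
        · subst hcj; rw [if_neg (fun h => hci h.symm), if_pos rfl, dj]
        · rw [if_neg (fun h => hci h.symm), if_neg (fun h => hcj h.symm),
            dother c (fun h => hci h) (fun h => hcj h)]
    have hfib2 : ∀ (κ : Fin 2 → ℕ), κ 0 = j → κ 1 = i → fib κ d := by
      intro κ h0 h1 c
      rw [card_fiber_two, h0, h1]
      by_cases hci : c = i
      · subst hci; rw [if_neg (fun h => hij h.symm), if_pos rfl, di]
      · by_cases hcj : c = j
        · subst hcj; rw [if_pos rfl, if_neg (fun h => hci h.symm), dj]
        · rw [if_neg (fun h => hcj h.symm), if_neg (fun h => hci h.symm),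
            dother c (fun h => hci h) (fun h => hcj h)]
    have hcnt : Nat.card {κ : Fin 2 → ℕ // proper (cycle 2) κ ∧ fib κ d} = 2 := by
      refine Nat.card_eq_two_iff.mpr ⟨⟨κa, (proper_cycle2_iff κa).mpr (by rw [ha0, ha1]; exact hij),
              hfib κa ha0 ha1⟩,
             ⟨κb, (proper_cycle2_iff κb).mpr (by rw [hb0, hb1]; exact fun h => hij h.symm),
              hfib2 κb hb0 hb1⟩, ?_, ?_⟩
      · intro h
        have h2 : κa 0 = κb 0 := congrFun (congrArg Subtype.val h) 0
        exact hij ((ha0.symm.trans h2).trans hb0)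
      · apply Set.eq_univ_iff_forall.mpr
        rintro ⟨κ, hp, hf⟩
        have hne := (proper_cycle2_iff κ).mp hp
        have h0m := color_mem_support hf 0
        have h1m := color_mem_support hf 1
        rw [hsuppeq, Finset.mem_insert, Finset.mem_singleton] at h0m h1m
        simp only [Set.mem_insert_iff, Set.mem_singleton_iff]
        rcases h0m with h0 | h0
        · left
          have h1 : κ 1 = j := by
            rcases h1m with h1 | h1
            · exact absurd (h0.trans h1.symm) hne
            · exact h1
          exact Subtype.ext (funext (Fin.forall_fin_two.mpr
            ⟨by show κ 0 = κa 0; rw [h0]; exact ha0.symm,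
             by show κ 1 = κa 1; rw [h1]; exact ha1.symm⟩))
        · right
          have h1 : κ 1 = i := by
            rcases h1m with h1 | h1
            · exact h1
            · exact absurd (h0.trans h1.symm) hne
          exact Subtype.ext (funext (Fin.forall_fin_two.mpr
            ⟨by show κ 0 = κb 0; rw [h0]; exact hb0.symm,
             by show κ 1 = κb 1; rw [h1]; exact hb1.symm⟩))
    rw [hcnt]
    norm_num
  · rw [if_neg hd]
    have hempty : IsEmpty {κ : Fin 2 → ℕ // proper (cycle 2) κ ∧ fib κ d} := by
      constructor
      rintro ⟨κ, hp, hf⟩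
      apply hd
      have hne := (proper_cycle2_iff κ).mp hp
      constructor
      · intro c
        rw [← hf c, card_fiber_two]
        by_cases h0 : κ 0 = c <;> by_cases h1 : κ 1 = c <;> simp [h0, h1]
        exact absurd (h0.trans h1.symm) hne
      · rw [fib_sum hf]; simp
    rw [Nat.card_of_isEmpty]
    norm_num


/-- For every `m ≥ 1`,
`X_{T^{3,m}} = 2 X_{P_{m+3}} − X_{C_2} · X_{P_{m+1}}`, where `C_2 = K_2` is a single
edge and `X_{C_2} = 2 e_2`. -/
theorem csf_tadpole_three (m : ℕ) (hm : 1 ≤ m) :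
    csf (tadpole 3 m) = 2 * csf (path (m + 3)) - csf (cycle 2) * csf (path (m + 1)) ∧
    csf (cycle 2) = 2 * esym 2 := by
  refine ⟨?_, csf_cycle2⟩
  rw [csf_mul (cycle 2) (path (m+1))]
  apply eq_sub_of_add_eq
  apply MvPowerSeries.ext; intro d
  rw [map_add, two_mul, map_add]
  simp only [coeff_csf]
  have h := card_identity m d
  qify at h
  linarith
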